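/- Let V and W be varieties of Ω-algebras of the same type without nullary operation symbols, and let Σ be any set of identities true in V. Then every algebra in the Mal'tsev product V ∘ W satisfies all the identities in Σ^p. -/

import Mathlib

structure Signature where
  symbols : Type
  arity : symbols → ℕ

structure Alg (S : Signature) where
  carrier : Type
  op : ∀ ω : S.symbols, (Fin (S.arity ω) → carrier) → carrier
  nonempty : Nonempty carrier

inductive Term (S : Signature) (X : Type) : Type
  | var : X → Term S X
  | app : ∀ ω : S.symbols, (Fin (S.arity ω) → Term S X) → Term S X

def Term.eval {S : Signature} {X : Type} (A : Alg S) (env : X → A.carrier) :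
    Term S X → A.carrier
  | .var x => env x
  | .app ω ts => A.op ω fun i => (ts i).eval A env

/-- The algebra `A` satisfies the identity `u = v`. -/
def Alg.sat {S : Signature} (A : Alg S) {X : Type} (u v : Term S X) : Prop :=
  ∀ env : X → A.carrier, u.eval A env = v.eval A env

/-- An identity: a pair of terms in the countably many variables `x₀, x₁, …`. -/
abbrev Ident (S : Signature) := Term S ℕ × Term S ℕ

/-- `A` lies in the variety axiomatized by the set of identities `E`. -/
def Alg.Models {S : Signature} (A : Alg S) (E : Set (Ident S)) : Prop :=
  ∀ e ∈ E, A.sat e.1 e.2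

/-- The identity `u = v` holds in the variety axiomatized by `E`. -/
def Conseq {S : Signature} (E : Set (Ident S)) {X : Type} (u v : Term S X) : Prop :=
  ∀ A : Alg S, A.Models E → A.sat u v

/-- `a` is an idempotent element of `A`. -/
def Alg.IsIdem {S : Signature} (A : Alg S) (a : A.carrier) : Prop :=
  ∀ ω : S.symbols, A.op ω (fun _ => a) = a

/-- `B` is (the universe of) a subalgebra of `A`. -/
def Alg.IsSubuniverse {S : Signature} (A : Alg S) (B : Set A.carrier) : Prop :=
  ∀ ω (a : Fin (S.arity ω) → A.carrier), (∀ i, a i ∈ B) → A.op ω a ∈ B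

/-- The subalgebra of `A` on a nonempty subuniverse `B`. -/
def Alg.subAlg {S : Signature} (A : Alg S) (B : Set A.carrier)
    (h : A.IsSubuniverse B) (hne : B.Nonempty) : Alg S where
  carrier := B
  op ω a := ⟨A.op ω fun i => (a i : A.carrier), h ω _ fun i => (a i).2⟩
  nonempty := hne.to_subtype

/-- A congruence of `A`: an equivalence relation compatible with all operations. -/
structure Congruence {S : Signature} (A : Alg S) where
  rel : A.carrier → A.carrier → Prop
  iseqv : Equivalence rel
  compat : ∀ ω (a b : Fin (S.arity ω) → A.carrier),
    (∀ i, rel (a i) (b i)) → rel (A.op ω a) (A.op ω b)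

def Congruence.setoid {S : Signature} {A : Alg S} (θ : Congruence A) :
    Setoid A.carrier := ⟨θ.rel, θ.iseqv⟩

/-- The quotient algebra `A/θ`. -/
noncomputable def Alg.quot {S : Signature} (A : Alg S) (θ : Congruence A) : Alg S where
  carrier := Quotient θ.setoid
  op ω q := Quotient.mk θ.setoid (A.op ω fun i => (q i).out)
  nonempty := A.nonempty.map (Quotient.mk θ.setoid)

/-- Membership in the Mal'tsev product of the varieties axiomatized by `V` and `W`:
`A` has a congruence `θ` with `A/θ` in (the variety of) `W` such that every
`θ`-class which is a subalgebra of `A` is an algebra in (the variety of) `V`. -/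
def InMaltsev {S : Signature} (V W : Set (Ident S)) (A : Alg S) : Prop :=
  ∃ θ : Congruence A, (A.quot θ).Models W ∧
    ∀ a : A.carrier, ∀ h : A.IsSubuniverse {b | θ.rel a b},
      (A.subAlg {b | θ.rel a b} h ⟨a, θ.iseqv.refl a⟩).Models V

/-- A class of algebras is a variety iff it is axiomatized by some set of identities. -/
def IsVarietyClass {S : Signature} (K : Alg S → Prop) : Prop :=
  ∃ E : Set (Ident S), ∀ A : Alg S, K A ↔ A.Models E

def Term.subst {S : Signature} {X Y : Type} (f : X → Term S Y) :
    Term S X → Term S Y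
  | .var x => f x
  | .app ω ts => .app ω fun i => (ts i).subst f

/-- The set `σᵖ` of identities obtained from the identity `σ` by substituting for
its variables pairwise `W`-equivalent term idempotents of (the variety of) `W`. -/
def sigmaP {S : Signature} (W : Set (Ident S)) (σ : Ident S) : Set (Ident S) :=
  { e | ∃ r : ℕ → Term S ℕ,
      (∀ i j : ℕ, Conseq W (r i) (r j)) ∧
      (∀ ω : S.symbols, Conseq W (Term.app ω fun _ => r 0) (r 0)) ∧
      e = (σ.1.subst r, σ.2.subst r) }

/-- `Σᵖ = ⋃_{σ ∈ Σ} σᵖ`. -/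
def SigmaP {S : Signature} (W : Set (Ident S)) (Sg : Set (Ident S)) :
    Set (Ident S) :=
  ⋃ σ ∈ Sg, sigmaP W σ


lemma eval_subst {S : Signature} {X Y : Type} (A : Alg S) (f : X → Term S Y)
    (t : Term S X) (env : Y → A.carrier) :
    (t.subst f).eval A env = t.eval A (fun x => (f x).eval A env) := by
  induction t with
  | var x => rfl
  | app ω ts ih => simp only [Term.subst, Term.eval]; exact congrArg _ (funext ih)

lemma eval_quot {S : Signature} (A : Alg S) (θ : Congruence A) {X : Type}
    (t : Term S X) (env : X → A.carrier) :
    t.eval (A.quot θ) (fun x => Quotient.mk θ.setoid (env x))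
      = Quotient.mk θ.setoid (t.eval A env) := by
  induction t with
  | var x => rfl
  | app ω ts ih =>
    show Quotient.mk θ.setoid (A.op ω fun i =>
      (Term.eval (A.quot θ) _ (ts i)).out) = _
    apply Quotient.sound
    apply θ.compat
    intro i
    rw [ih i]
    exact Quotient.exact (s := θ.setoid) (Quotient.out_eq _)

lemma quot_op_mk {S : Signature} (A : Alg S) (θ : Congruence A)
    (ω : S.symbols) (x : Fin (S.arity ω) → A.carrier) :
    (A.quot θ).op ω (fun i => Quotient.mk θ.setoid (x i))
      = Quotient.mk θ.setoid (A.op ω x) := by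
  apply Quotient.sound
  apply θ.compat
  intro i
  exact Quotient.exact (s := θ.setoid) (Quotient.out_eq _)

lemma eval_subAlg {S : Signature} (A : Alg S) (B : Set A.carrier)
    (h : A.IsSubuniverse B) (hne : B.Nonempty) {X : Type}
    (t : Term S X) (env : X → B) :
    (t.eval (A.subAlg B h hne) env).1
      = t.eval A (fun x => (env x).1) := by
  induction t with
  | var x => rfl
  | app ω ts ih =>
    show A.op ω (fun i => (Term.eval (A.subAlg B h hne) env (ts i)).1) = _
    exact congrArg _ (funext ih)

/-- If `Σ` is any set of identities true in the variety `V`, then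
every algebra in the Mal'tsev product `V ∘ W` satisfies all identities in `Σᵖ`. -/
theorem stmt_3 (S : Signature) (h0 : ∀ ω : S.symbols, 0 < S.arity ω)
    (V W : Set (Ident S)) (Sg : Set (Ident S))
    (hSg : ∀ σ ∈ Sg, Conseq V σ.1 σ.2) :
    ∀ A : Alg S, InMaltsev V W A → A.Models (SigmaP W Sg) := by
  rintro A ⟨θ, hW, hV⟩ e he env
  simp only [SigmaP, Set.mem_iUnion] at he
  obtain ⟨σ, hσSg, r, hr1, hr2, he⟩ := he
  subst he
  set a : ℕ → A.carrier := fun n => (r n).eval A env with ha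
  set env' : ℕ → (A.quot θ).carrier := fun n => Quotient.mk θ.setoid (env n) with henv'
  have hrel : ∀ i, θ.rel (a 0) (a i) := by
    intro i
    apply Quotient.exact (s := θ.setoid)
    have := hr1 0 i (A.quot θ) hW env'
    rwa [henv', eval_quot, eval_quot] at this
  have hidem : ∀ ω : S.symbols,
      (A.quot θ).op ω (fun _ => Quotient.mk θ.setoid (a 0)) = Quotient.mk θ.setoid (a 0) := by
    intro ω
    have := hr2 ω (A.quot θ) hW env'
    simp only [Term.eval] at this
    rwa [henv', eval_quot] at this
  have hsub : A.IsSubuniverse {b | θ.rel (a 0) b} := by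
    intro ω x hx
    apply Quotient.exact (s := θ.setoid)
    rw [← quot_op_mk]
    have : (fun i => Quotient.mk θ.setoid (x i))
        = fun _ : Fin (S.arity ω) => Quotient.mk θ.setoid (a 0) := by
      funext i
      exact (Quotient.sound (hx i)).symm
    rw [this, hidem ω]
  have hmod := hV (a 0) hsub
  have hsat := hSg σ hσSg _ hmod
  have henvB : ∀ n, a n ∈ {b | θ.rel (a 0) b} := fun n => hrel n
  set envB : ℕ → {b | θ.rel (a 0) b} := fun n => ⟨a n, henvB n⟩ with henvB'
  have := congrArg (Subtype.val) (hsat envB)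
  have e1 := eval_subAlg A {b | θ.rel (a 0) b} hsub ⟨a 0, θ.iseqv.refl (a 0)⟩ σ.1 envB
  have e2 := eval_subAlg A {b | θ.rel (a 0) b} hsub ⟨a 0, θ.iseqv.refl (a 0)⟩ σ.2 envB
  replace this := (e1.symm.trans this).trans e2
  show (σ.1.subst r).eval A env = (σ.2.subst r).eval A env
  rw [eval_subst, eval_subst]
  exact this
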